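/- Let X = Σ_{i=1}^{N₁} U_i and Y = Σ_{i=1}^{N₂} V_i, where N₁ ~ Pascal(α, p) (number of failures before α successes, so P(N₁ = k) = C(α+k-1, k) p^α q^k), U_i i.i.d. Exponential with mean β; N₂ ~ Binomial(α, q), V_i i.i.d. Exponential with mean β/p; all summands independent of their count variables, p ∈ (0,1), q = 1-p, α ∈ ℕ₊, β > 0. Then X and Y have the same distribution (equivalently, the same Laplace transform). -/

import Mathlib

open MeasureTheory Set Real ProbabilityTheory
open scoped ENNReal

lemma conv_withDensity (f g : ℝ → ℝ≥0∞) (hf : Measurable f) (hg : Measurable g) :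
    Measure.conv (volume.withDensity f) (volume.withDensity g)
      = volume.withDensity (fun y => ∫⁻ x, f x * g (y - x)) := by
  have hsub : Measurable fun z : ℝ × ℝ => f z.1 * g (z.2 - z.1) :=
    (hf.comp measurable_fst).mul (hg.comp (measurable_snd.sub measurable_fst))
  ext s hs
  have hconv : Measure.conv (volume.withDensity f) (volume.withDensity g)
      = Measure.map (fun z : ℝ × ℝ => z.1 + z.2) ((volume.withDensity f).prod (volume.withDensity g)) := rfl
  rw [hconv, Measure.map_apply measurable_add hs,
    Measure.prod_apply (measurable_add hs), withDensity_apply _ hs]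
  have h1 : ∀ x : ℝ, (volume.withDensity g) (Prod.mk x ⁻¹' ((fun z : ℝ × ℝ => z.1 + z.2) ⁻¹' s))
      = ∫⁻ y, s.indicator (fun z => g (z - x)) y := by
    intro x
    have hset : (Prod.mk x ⁻¹' ((fun z : ℝ × ℝ => z.1 + z.2) ⁻¹' s)) = (fun y => x + y) ⁻¹' s := rfl
    rw [hset, withDensity_apply _ (measurable_const_add x hs),
      ← lintegral_indicator (measurable_const_add x hs) g]
    have h2 : ∀ y, ((fun y => x + y) ⁻¹' s).indicator g y
        = s.indicator (fun z => g (z - x)) (x + y) := by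
      intro y
      by_cases h : x + y ∈ s <;> simp [indicator, h, Set.mem_preimage]
    simp_rw [h2]
    exact lintegral_add_left_eq_self (s.indicator (fun z => g (z - x))) x
  simp_rw [h1]
  have hind : ∀ x : ℝ, Measurable fun y => s.indicator (fun z => f x * g (z - x)) y := by
    intro x
    exact (((hg.comp (measurable_sub_const x)).const_mul (f x)).indicator hs)
  calc ∫⁻ x, (∫⁻ y, s.indicator (fun z => g (z - x)) y) ∂(volume.withDensity f)
      = ∫⁻ x, f x * ∫⁻ y, s.indicator (fun z => g (z - x)) y := by
        rw [lintegral_withDensity_eq_lintegral_mul _ hf]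
        · rfl
        · apply Measurable.lintegral_prod_right (f := fun x y => s.indicator (fun z => g (z - x)) y)
          exact ((hg.comp (measurable_snd.sub measurable_fst)).indicator (measurable_snd hs))
    _ = ∫⁻ x, ∫⁻ y, s.indicator (fun z => f x * g (z - x)) y := by
        congr 1; ext x
        have hgx : Measurable (s.indicator (fun z : ℝ => g (z - x))) :=
          Measurable.indicator (by fun_prop) hs
        rw [← lintegral_const_mul _ hgx]
        congr 1; ext y
        by_cases h : y ∈ s <;> simp [indicator, h]
    _ = ∫⁻ y, ∫⁻ x, s.indicator (fun z => f x * g (z - x)) y := by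
        apply lintegral_lintegral_swap
        have heq : Function.uncurry (fun x => s.indicator fun z => f x * g (z - x))
            = (Prod.snd ⁻¹' s).indicator (fun z : ℝ × ℝ => f z.1 * g (z.2 - z.1)) := by
          ext z
          by_cases h : z.2 ∈ s <;> simp [Function.uncurry, indicator, h]
        rw [heq]
        exact (hsub.indicator (measurable_snd hs)).aemeasurable
    _ = ∫⁻ y, s.indicator (fun w => ∫⁻ x, f x * g (w - x)) y := by
        congr 1; ext y
        by_cases h : y ∈ s <;> simp [indicator, h]
    _ = ∫⁻ y in s, ∫⁻ x, f x * g (y - x) := lintegral_indicator hs _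

/-- The law of an exponential random variable with mean `β`, as a density
with respect to Lebesgue measure. -/
noncomputable def expLaw (β : ℝ) : Measure ℝ :=
  volume.withDensity fun x => ENNReal.ofReal (if 0 ≤ x then β⁻¹ * Real.exp (-x / β) else 0)

/-- real Gamma(n+1, β) density -/
noncomputable def rpdf (n : ℕ) (β : ℝ) (x : ℝ) : ℝ :=
  if 0 ≤ x then x ^ n * Real.exp (-x / β) / (β ^ (n + 1) * n.factorial) else 0

lemma rpdf_nonneg (n : ℕ) {β : ℝ} (hβ : 0 < β) (x : ℝ) : 0 ≤ rpdf n β x := by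
  unfold rpdf
  by_cases h : 0 ≤ x
  · rw [if_pos h]; positivity
  · rw [if_neg h]

/-- Gamma(n+1, β) density. -/
noncomputable def gpdf (n : ℕ) (β : ℝ) (x : ℝ) : ℝ≥0∞ := ENNReal.ofReal (rpdf n β x)

lemma rpdf_measurable (n : ℕ) (β : ℝ) : Measurable (rpdf n β) := by
  unfold rpdf
  exact Measurable.ite (measurableSet_le measurable_const measurable_id) (by fun_prop)
    measurable_const

lemma gpdf_measurable (n : ℕ) (β : ℝ) : Measurable (gpdf n β) :=
  (rpdf_measurable n β).ennreal_ofReal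

lemma expLaw_eq (β : ℝ) : expLaw β = volume.withDensity (gpdf 0 β) := by
  unfold expLaw gpdf rpdf
  congr 1
  ext x
  congr 1
  by_cases h : 0 ≤ x
  · simp [h]; ring
  · simp [h]

lemma gpdf_conv (n : ℕ) (β : ℝ) (hβ : 0 < β) (y : ℝ) :
    ∫⁻ x, gpdf n β x * gpdf 0 β (y - x) = gpdf (n + 1) β y := by
  have hfact : (0:ℝ) < n.factorial := by positivity
  by_cases hy : 0 ≤ y
  · have key : ∀ x : ℝ, gpdf n β x * gpdf 0 β (y - x)
        = ENNReal.ofReal ((Icc 0 y).indicator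
            (fun t => t ^ n * (Real.exp (-y / β) / (β ^ (n + 2) * n.factorial))) x) := by
      intro x
      rw [gpdf, gpdf, ← ENNReal.ofReal_mul (rpdf_nonneg n hβ x)]
      congr 1
      unfold rpdf
      by_cases h1 : 0 ≤ x
      · by_cases h2 : 0 ≤ y - x
        · have hx : x ∈ Icc 0 y := ⟨h1, by linarith⟩
          rw [if_pos h1, if_pos h2, indicator_of_mem hx]
          have hexp : Real.exp (-x / β) * Real.exp (-(y - x) / β) = Real.exp (-y / β) := by
            rw [← Real.exp_add]
            congr 1
            field_simp
            ring
          rw [← hexp]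
          simp [Nat.factorial]
          ring
        · have hx : x ∉ Icc 0 y := by simp only [mem_Icc, not_and, not_le]; intro _; linarith
          rw [if_neg h2, indicator_of_notMem hx, mul_zero]
      · have hx : x ∉ Icc 0 y := fun h => h1 h.1
        rw [if_neg h1, indicator_of_notMem hx, zero_mul]
    simp_rw [key]
    rw [← ofReal_integral_eq_lintegral_ofReal]
    · unfold gpdf rpdf
      rw [if_pos hy]
      congr 1
      rw [integral_indicator measurableSet_Icc, integral_mul_const]
      rw [show ∫ t in Icc 0 y, t ^ n = ∫ t in (0:ℝ)..y, t ^ n by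
        rw [intervalIntegral.integral_of_le hy, integral_Icc_eq_integral_Ioc]]
      rw [integral_pow, zero_pow (Nat.succ_ne_zero n), sub_zero, Nat.factorial_succ]
      have h1 : ((n:ℝ) + 1) ≠ 0 := by positivity
      push_cast
      field_simp
    · exact ((continuous_pow n).mul continuous_const).integrableOn_Icc.integrable_indicator
        measurableSet_Icc
    · refine Filter.Eventually.of_forall fun x => ?_
      show (0:ℝ) ≤ _
      by_cases h : x ∈ Icc 0 y
      · rw [indicator_of_mem h]
        exact mul_nonneg (pow_nonneg h.1 n) (by positivity)
      · rw [indicator_of_notMem h]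
  · have hz : ∀ x : ℝ, gpdf n β x * gpdf 0 β (y - x) = 0 := by
      intro x
      unfold gpdf rpdf
      by_cases h1 : 0 ≤ x
      · have h2 : ¬ 0 ≤ y - x := by push_neg at hy ⊢; linarith
        rw [if_neg h2]
        simp
      · rw [if_neg h1]
        simp
    simp_rw [hz]
    rw [lintegral_zero, gpdf, rpdf, if_neg hy]
    simp

noncomputable def convPow (μ : Measure ℝ) : ℕ → Measure ℝ
  | 0 => Measure.dirac 0
  | n+1 => Measure.conv (convPow μ n) μ

instance convPow_sfinite (μ : Measure ℝ) [SFinite μ] (n : ℕ) : SFinite (convPow μ n) := by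
  induction n with
  | zero => unfold convPow; infer_instance
  | succ n ih => unfold convPow; infer_instance

lemma IndepFun.map_add_conv {Ω : Type*} [MeasurableSpace Ω] {P : Measure Ω}
    [IsProbabilityMeasure P] {X Y : Ω → ℝ} (hX : Measurable X) (hY : Measurable Y)
    (h : IndepFun X Y P) :
    Measure.map (fun ω => X ω + Y ω) P = Measure.conv (Measure.map X P) (Measure.map Y P) := by
  have hc : Measure.conv (Measure.map X P) (Measure.map Y P)
      = Measure.map (fun z : ℝ × ℝ => z.1 + z.2) ((Measure.map X P).prod (Measure.map Y P)) := rfl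
  rw [hc, ← (indepFun_iff_map_prod_eq_prod_map_map hX.aemeasurable hY.aemeasurable).mp h,
    Measure.map_map measurable_add (hX.prodMk hY)]
  rfl

lemma map_sum_range {Ω : Type*} [MeasurableSpace Ω] {P : Measure Ω} [IsProbabilityMeasure P]
    {U : ℕ → Ω → ℝ} (hU : ∀ k, Measurable (U k))
    (hind : iIndepFun U P)
    {μ : Measure ℝ} (hlaw : ∀ k, Measure.map (U k) P = μ) (n : ℕ) :
    Measure.map (fun ω => ∑ k ∈ Finset.range n, U k ω) P = convPow μ n := by
  induction n with
  | zero =>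
      simp only [Finset.range_zero, Finset.sum_empty]
      rw [Measure.map_const, measure_univ, one_smul]
      rfl
  | succ n ih =>
      have hSmeas : Measurable (fun ω => ∑ k ∈ Finset.range n, U k ω) :=
        Finset.measurable_sum _ fun i _ => hU i
      have hI : IndepFun (fun ω => ∑ k ∈ Finset.range n, U k ω) (U n) P := by
        have := hind.indepFun_finsetSum_of_notMem hU (Finset.notMem_range_self (n := n))
        convert this using 1
        ext ω
        simp [Finset.sum_apply]
      have hsum : (fun ω => ∑ k ∈ Finset.range (n + 1), U k ω)
          = fun ω => (∑ k ∈ Finset.range n, U k ω) + U n ω := by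
        ext ω; rw [Finset.sum_range_succ]
      rw [hsum, IndepFun.map_add_conv hSmeas (hU n) hI, ih, hlaw]
      rfl
lemma convPow_expLaw (β : ℝ) (hβ : 0 < β) (n : ℕ) :
    convPow (expLaw β) (n + 1) = volume.withDensity (gpdf n β) := by
  induction n with
  | zero =>
      show Measure.conv (Measure.dirac 0) (expLaw β) = _
      rw [expLaw_eq]
      rw [Measure.dirac_zero_conv]
  | succ n ih =>
      show Measure.conv (convPow (expLaw β) (n + 1)) (expLaw β) = _
      rw [ih, expLaw_eq, conv_withDensity _ _ (gpdf_measurable n β) (gpdf_measurable 0 β)]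
      congr 1
      ext y
      exact gpdf_conv n β hβ y

-- compound decomposition
lemma compound_measurable {Ω : Type*} [MeasurableSpace Ω] {N : Ω → ℕ} {U : ℕ → Ω → ℝ}
    (hN : Measurable N) (hU : ∀ k, Measurable (U k)) :
    Measurable fun ω => ∑ k ∈ Finset.range (N ω), U k ω := by
  have h : (fun ω => ∑ k ∈ Finset.range (N ω), U k ω)
      = fun ω => (fun p : Ω × ℕ => ∑ k ∈ Finset.range p.2, U k p.1) (ω, N ω) := rfl
  rw [h]
  have hh : Measurable fun p : Ω × ℕ => ∑ k ∈ Finset.range p.2, U k p.1 :=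
    measurable_from_prod_countable_left fun n => by simp only []; exact Finset.measurable_sum _ fun i _ => hU i
  exact hh.comp (measurable_id.prodMk hN)

lemma compound_decomp {Ω : Type*} [MeasurableSpace Ω] {P : Measure Ω} [IsProbabilityMeasure P]
    {N : Ω → ℕ} {U : ℕ → Ω → ℝ} (hN : Measurable N) (hU : ∀ k, Measurable (U k))
    (hind : IndepFun N (fun ω k => U k ω) P) {s : Set ℝ} (hs : MeasurableSet s) :
    Measure.map (fun ω => ∑ k ∈ Finset.range (N ω), U k ω) P s
      = ∑' n, P {ω | N ω = n} * Measure.map (fun ω => ∑ k ∈ Finset.range n, U k ω) P s := by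
  rw [Measure.map_apply (compound_measurable hN hU) hs]
  have hdec : (fun ω => ∑ k ∈ Finset.range (N ω), U k ω) ⁻¹' s
      = ⋃ n, (N ⁻¹' {n} ∩ (fun ω => ∑ k ∈ Finset.range n, U k ω) ⁻¹' s) := by
    ext ω
    simp only [mem_preimage, mem_iUnion, mem_inter_iff, mem_singleton_iff]
    constructor
    · intro h; exact ⟨N ω, rfl, h⟩
    · rintro ⟨n, rfl, h⟩; exact h
  have hmeas : ∀ n : ℕ, Measurable fun ω => ∑ k ∈ Finset.range n, U k ω :=
    fun n => Finset.measurable_sum _ fun i _ => hU i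
  rw [hdec, measure_iUnion]
  · congr 1
    ext n
    have hIn : IndepFun N (fun ω => ∑ k ∈ Finset.range n, U k ω) P := by
      have hg : Measurable fun f : ℕ → ℝ => ∑ k ∈ Finset.range n, f k :=
        Finset.measurable_sum _ fun i _ => measurable_pi_apply i
      exact hind.comp measurable_id hg
    rw [hIn.measure_inter_preimage_eq_mul _ _ (measurableSet_singleton n) hs,
      Measure.map_apply (hmeas n) hs]
    rfl
  · intro i j hij
    simp only [Function.onFun, disjoint_left]
    rintro ω ⟨h1, -⟩ ⟨h2, -⟩
    exact hij (h1.symm.trans h2)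
  · intro n
    exact (hN (measurableSet_singleton n)).inter ((hmeas n) hs)



lemma vandermonde_aux (a k : ℕ) :
    (a + k).choose (k + 1) = ∑ m ∈ Finset.range (k + 1), a.choose (m + 1) * k.choose m := by
  rw [Nat.add_choose_eq, Finset.Nat.sum_antidiagonal_eq_sum_range_succ_mk]
  rw [Finset.sum_range_succ']
  have h0 : a.choose 0 * k.choose (k + 1 - 0) = 0 := by
    simp [Nat.choose_eq_zero_of_lt (Nat.lt_succ_self k)]
  rw [h0, add_zero]
  apply Finset.sum_congr rfl
  intro m hm
  have hmk : m ≤ k := by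
    have := Finset.mem_range.mp hm; omega
  show a.choose (m + 1) * k.choose (k + 1 - (m + 1)) = _
  congr 1
  have h2 : k + 1 - (m + 1) = k - m := by omega
  rw [h2, Nat.choose_symm hmk]

lemma exp_tsum (t : ℝ) : Real.exp t = ∑' n : ℕ, t ^ n / n.factorial := by
  rw [Real.exp_eq_exp_ℝ, NormedSpace.exp_eq_tsum_div]

lemma density_identity (α : ℕ) (p q β x : ℝ) (hp : 0 < p) (hp1 : p < 1)
    (hq : q = 1 - p) (hβ : 0 < β) :
    ∑' k : ℕ, ENNReal.ofReal (((α + (k + 1) - 1).choose (k + 1) : ℝ) * p ^ α * q ^ (k + 1))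
        * gpdf k β x
      = ∑' k : ℕ, ENNReal.ofReal ((α.choose (k + 1) : ℝ) * q ^ (k + 1) * p ^ (α - (k + 1)))
        * gpdf k (β / p) x := by
  have hq0 : 0 < q := by rw [hq]; linarith
  have hβp : 0 < β / p := by positivity
  by_cases hx : 0 ≤ x
  case neg =>
    have h1 : ∀ (n : ℕ) (b : ℝ), gpdf n b x = 0 := by
      intro n b; unfold gpdf rpdf; rw [if_neg hx]; simp
    simp [h1]
  case pos =>
  -- real-valued terms
  set t : ℝ := q * x / β with ht
  have ht0 : 0 ≤ t := by positivity
  have hDnn : ∀ m : ℕ,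
      0 ≤ (α.choose (m + 1) : ℝ) * p ^ α * q ^ (m + 1) * x ^ m * Real.exp (-x / β)
        / (β ^ (m + 1) * m.factorial) := by
    intro m; positivity
  set D : ℕ → ℝ := fun m => (α.choose (m + 1) : ℝ) * p ^ α * q ^ (m + 1) * x ^ m
      * Real.exp (-x / β) / (β ^ (m + 1) * m.factorial) with hD
  -- c k m
  set c : ℕ → ℕ → ℝ := fun k m => (k.choose m : ℝ) * (α.choose (m + 1) : ℝ) * p ^ α * q ^ (k + 1)
      * rpdf k β x with hc
  have hrpdfnn : ∀ (n : ℕ) (b : ℝ), 0 < b → 0 ≤ rpdf n b x := by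
    intro n b hb; rw [rpdf, if_pos hx]; positivity
  have hcnn : ∀ k m, 0 ≤ c k m := by
    intro k m
    have := hrpdfnn k β hβ
    rw [hc]; positivity
  -- step: LHS term = finset sum of ofReal (c k m)
  have hterm : ∀ k : ℕ,
      ENNReal.ofReal (((α + (k + 1) - 1).choose (k + 1) : ℝ) * p ^ α * q ^ (k + 1)) * gpdf k β x
        = ∑ m ∈ Finset.range (k + 1), ENNReal.ofReal (c k m) := by
    intro k
    have hidx : α + (k + 1) - 1 = α + k := by omega
    have hnn : (0:ℝ) ≤ ((α + k).choose (k + 1) : ℝ) * p ^ α * q ^ (k + 1) := by positivity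
    rw [hidx, gpdf, ← ENNReal.ofReal_mul hnn]
    rw [← ENNReal.ofReal_sum_of_nonneg (fun m _ => hcnn k m)]
    congr 1
    have hv : (((α + k).choose (k + 1) : ℕ) : ℝ)
        = ∑ m ∈ Finset.range (k + 1), (α.choose (m + 1) : ℝ) * (k.choose m : ℝ) := by
      rw [vandermonde_aux α k]
      push_cast
      rfl
    rw [hv, Finset.sum_mul, Finset.sum_mul, Finset.sum_mul]
    apply Finset.sum_congr rfl
    intro m _
    rw [hc]
    ring
  simp_rw [hterm]
  -- step: rearrange double sum
  set F : ℕ → ℕ → ℝ≥0∞ := fun k m => if m ≤ k then ENNReal.ofReal (c k m) else 0 with hF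
  have hFs : ∀ k : ℕ, ∑ m ∈ Finset.range (k + 1), ENNReal.ofReal (c k m) = ∑' m, F k m := by
    intro k
    rw [tsum_eq_sum (s := Finset.range (k + 1))]
    · apply Finset.sum_congr rfl
      intro m hm
      rw [hF]
      simp only []
      rw [if_pos (by have := Finset.mem_range.mp hm; omega)]
    · intro m hm
      rw [hF]
      simp only []
      rw [if_neg (by intro h; exact hm (Finset.mem_range.mpr (by omega)))]
  simp_rw [hFs]
  rw [ENNReal.tsum_comm]
  -- inner sum over k for fixed m
  have hinner : ∀ m : ℕ, ∑' k, F k m = ENNReal.ofReal (D m * Real.exp t) := by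
    intro m
    have hshift : ∑' k, F k m = ∑' j, F (m + j) m := by
      symm
      apply Function.Injective.tsum_eq (g := fun j => m + j) (f := fun k => F k m)
      · intro a b hab
        simp only [] at hab
        omega
      · intro k hk
        rw [Function.mem_support] at hk
        have hmk : m ≤ k := by
          by_contra h
          rw [hF] at hk
          simp only [] at hk
          rw [if_neg h] at hk
          exact hk rfl
        exact ⟨k - m, by show m + (k - m) = k; omega⟩
    rw [hshift]
    have hFj : ∀ j : ℕ, F (m + j) m = ENNReal.ofReal (D m * (t ^ j / j.factorial)) := by
      intro j
      rw [hF]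
      simp only []
      rw [if_pos (Nat.le_add_right m j)]
      congr 1
      simp only [hc, hD]
      unfold rpdf
      rw [if_pos hx]
      have hfac : (((m + j).choose m : ℕ) : ℝ) * m.factorial * j.factorial
          = (m + j).factorial := by
        have := Nat.add_choose_mul_factorial_mul_factorial j m
        have h2 : (j + m).choose m * j.factorial * m.factorial = (j + m).factorial := by
          rw [show (j+m).choose m * j.factorial * m.factorial
            = (j+m).choose m * m.factorial * j.factorial by ring] at this ⊢
          omega
        rw [add_comm m j]
        push_cast [← h2]
        ring
      have hb : (β:ℝ) ≠ 0 := ne_of_gt hβ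
      have hmf : (m.factorial : ℝ) ≠ 0 := by positivity
      have hjf : (j.factorial : ℝ) ≠ 0 := by positivity
      have hmjf : ((m + j).factorial : ℝ) ≠ 0 := by positivity
      rw [ht]
      field_simp
      rw [← hfac]
      ring_nf
      simp only [inv_pow]
      field_simp
    simp_rw [hFj]
    rw [← ENNReal.ofReal_tsum_of_nonneg]
    · congr 1
      rw [tsum_mul_left, ← exp_tsum]
    · intro j
      have := hDnn m
      rw [hD]
      positivity
    · exact (Real.summable_pow_div_factorial t).mul_left _
  simp_rw [hinner]
  -- final: termwise equality with RHS
  congr 1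
  ext m
  unfold gpdf rpdf
  rw [if_pos hx]
  have hnn2 : (0:ℝ) ≤ (α.choose (m + 1) : ℝ) * q ^ (m + 1) * p ^ (α - (m + 1)) := by positivity
  rw [← ENNReal.ofReal_mul hnn2]
  congr 1
  have hexp : Real.exp (-x / β) * Real.exp t = Real.exp (-x / (β / p)) := by
    rw [← Real.exp_add, ht]
    congr 1
    rw [hq]
    field_simp
    ring
  by_cases hm : m + 1 ≤ α
  · have hps : p ^ (α - (m + 1)) * p ^ (m + 1) = p ^ α := pow_sub_mul_pow p hm
    rw [hD]
    have hb : (β:ℝ) ≠ 0 := ne_of_gt hβ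
    have hpne : (p:ℝ) ≠ 0 := ne_of_gt hp
    have hmf : (m.factorial : ℝ) ≠ 0 := by positivity
    rw [div_pow, ← hexp, ← hps]
    field_simp
  · have hch : α.choose (m + 1) = 0 := Nat.choose_eq_zero_of_lt (by omega)
    simp only [hD, hch, Nat.cast_zero, zero_mul, mul_zero, zero_div]

/-- one-sided computation of the compound law -/
lemma compound_law {Ω : Type*} [MeasurableSpace Ω] (P : Measure Ω) [IsProbabilityMeasure P]
    {N : Ω → ℕ} {U : ℕ → Ω → ℝ} (hN : Measurable N) (hU : ∀ k, Measurable (U k))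
    (hind : iIndepFun U P)
    (hNind : IndepFun N (fun ω k => U k ω) P)
    {β : ℝ} (hβ : 0 < β) (hlaw : ∀ k, Measure.map (U k) P = expLaw β)
    {s : Set ℝ} (hs : MeasurableSet s) :
    Measure.map (fun ω => ∑ k ∈ Finset.range (N ω), U k ω) P s
      = P {ω | N ω = 0} * Measure.dirac (0:ℝ) s
        + ∫⁻ x in s, ∑' k : ℕ, P {ω | N ω = k + 1} * gpdf k β x := by
  rw [compound_decomp hN hU hNind hs]
  have hmap : ∀ n : ℕ, Measure.map (fun ω => ∑ k ∈ Finset.range n, U k ω) P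
      = convPow (expLaw β) n := map_sum_range hU hind hlaw
  simp_rw [hmap]
  rw [tsum_eq_zero_add' ENNReal.summable]
  have hcp : ∀ k : ℕ, convPow (expLaw β) (k + 1) s = ∫⁻ x in s, gpdf k β x := by
    intro k
    rw [convPow_expLaw β hβ k, withDensity_apply _ hs]
  simp_rw [hcp]
  congr 1
  rw [lintegral_tsum fun k => ((gpdf_measurable k β).const_mul _).aemeasurable]
  congr 1
  ext k
  rw [lintegral_const_mul _ (gpdf_measurable k β)]

/-- A compound Pascal(α, p) sum of exponentials with mean `β` has the same
distribution as a compound Binomial(α, q) sum of exponentials with mean `β/p`. -/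
theorem compound_pascal_exp_eq_compound_binomial_exp
    {Ω₁ Ω₂ : Type*} [MeasurableSpace Ω₁] [MeasurableSpace Ω₂]
    (P₁ : Measure Ω₁) [IsProbabilityMeasure P₁]
    (P₂ : Measure Ω₂) [IsProbabilityMeasure P₂]
    (α : ℕ) (hα : 0 < α) (p q β : ℝ) (hp : 0 < p) (hp1 : p < 1)
    (hq : q = 1 - p) (hβ : 0 < β)
    (N₁ : Ω₁ → ℕ) (U : ℕ → Ω₁ → ℝ)
    (N₂ : Ω₂ → ℕ) (V : ℕ → Ω₂ → ℝ)
    (hN₁ : Measurable N₁) (hU : ∀ k, Measurable (U k))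
    (hN₂ : Measurable N₂) (hV : ∀ k, Measurable (V k))
    -- N₁ ~ Pascal(α, p), number of failures before α successes
    (hN₁law : ∀ k : ℕ, P₁ {ω | N₁ ω = k}
      = ENNReal.ofReal (((α + k - 1).choose k : ℝ) * p ^ α * q ^ k))
    -- N₂ ~ Binomial(α, q)
    (hN₂law : ∀ k : ℕ, P₂ {ω | N₂ ω = k}
      = ENNReal.ofReal ((α.choose k : ℝ) * q ^ k * p ^ (α - k)))
    -- U_i i.i.d. exponential with mean β, V_i i.i.d. exponential with mean β/p
    (hUlaw : ∀ k, Measure.map (U k) P₁ = expLaw β)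
    (hVlaw : ∀ k, Measure.map (V k) P₂ = expLaw (β / p))
    (hUindep : iIndepFun U P₁)
    (hVindep : iIndepFun V P₂)
    (hN₁indep : IndepFun N₁ (fun ω k => U k ω) P₁)
    (hN₂indep : IndepFun N₂ (fun ω k => V k ω) P₂) :
    Measure.map (fun ω => ∑ k ∈ Finset.range (N₁ ω), U k ω) P₁
      = Measure.map (fun ω => ∑ k ∈ Finset.range (N₂ ω), V k ω) P₂ := by
  have hβp : 0 < β / p := by positivity
  ext s hs
  rw [compound_law P₁ hN₁ hU hUindep hN₁indep hβ hUlaw hs,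
    compound_law P₂ hN₂ hV hVindep hN₂indep hβp hVlaw hs]
  congr 1
  · -- atoms at 0 agree
    rw [hN₁law 0, hN₂law 0]
    norm_num
  · -- densities agree
    congr 1
    ext x
    simp_rw [hN₁law, hN₂law]
    exact density_identity α p q β x hp hp1 hq hβ
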